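/- arXiv:1301.3001 — 2 statements merged into one kernel-verified Lean document; each statement's English description precedes it below -/
import Mathlib

section
/- Let G be a group with no 2-torsion, Z its center, and x ∈ G with x² ∈ Z. If for some g ∈ G the commutator [x,g] commutes with x, then x commutes with g. -/
open scoped commutatorElement

theorem stmt_12 {G : Type*} [Group G]
    (htor : ∀ y : G, y ^ 2 = 1 → y = 1)
    (x : G) (hx : x ^ 2 ∈ Subgroup.center G) (g : G)
    (hcomm : ⁅x, g⁆ * x = x * ⁅x, g⁆) :
    x * g = g * x := by
  have hz := (Subgroup.mem_center_iff.mp hx) g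
  have hsq : ⁅x, g⁆ ^ 2 = 1 := by
    have h1 : ⁅x, g⁆ = x⁻¹ * ⁅x, g⁆ * x := by
      rw [mul_assoc, hcomm]; group
    calc ⁅x, g⁆ ^ 2 = ⁅x, g⁆ * (x⁻¹ * ⁅x, g⁆ * x) := by rw [← h1]; ring_nf; rw [sq]
    _ = x * (g * x⁻¹ ^ 2) * g⁻¹ * x := by simp [commutatorElement_def]; group
    _ = x * (x⁻¹ ^ 2 * g) * g⁻¹ * x := by
        congr 2
        have hc : Commute g (x ^ 2)⁻¹ := (Commute.inv_right hz)
        simpa [inv_pow] using hc.eq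
    _ = 1 := by group
  have := htor _ hsq
  rw [commutatorElement_def] at this
  have := mul_eq_one_iff_eq_inv.mp this
  calc x * g = (x * g * x⁻¹ * g⁻¹) * (g * x) := by group
  _ = g * x := by rw [this]; group
end

section
/- Let G be a group, N₁ ⊇ N₂ ⊇ ⋯ normal subgroups of G with [Nᵢ,Nⱼ] ⊆ N_{i+j}. Fix k, and suppose x ∈ N₂ satisfies: (a) x² ∈ Z·N_p for some p < k, where Z is the center of G; (b) [x, y] ∈ N_m for all y ∈ N_l, where l < m < k; (c) [x, y] ∈ N_k for all y ∈ N_m; (d) [u, v] ∈ N_k for all u ∈ N_l, v ∈ N_p; (e) G/N_k has no 2-torsion. Then [x, y] ∈ N_k for all y ∈ N_l. -/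
open scoped commutatorElement

theorem stmt_15 {G : Type*} [Group G] (N : ℕ → Subgroup G)
    (hnorm : ∀ i, (N i).Normal)
    (hdesc : ∀ i, N (i + 1) ≤ N i)
    (hcomm : ∀ i j, ⁅N i, N j⁆ ≤ N (i + j))
    (k p l m : ℕ) (hpk : p < k) (hlm : l < m) (hmk : m < k)
    (x : G) (hx : x ∈ N 2)
    (ha : ∃ z ∈ Subgroup.center G, ∃ h ∈ N p, x ^ 2 = z * h)
    (hb : ∀ y ∈ N l, ⁅x, y⁆ ∈ N m)
    (hc : ∀ y ∈ N m, ⁅x, y⁆ ∈ N k)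
    (hd : ∀ u ∈ N l, ∀ v ∈ N p, ⁅u, v⁆ ∈ N k)
    (he : ∀ y : G, y ^ 2 ∈ N k → y ∈ N k) :
    ∀ y ∈ N l, ⁅x, y⁆ ∈ N k := by
  intro y hy
  obtain ⟨z, hz, h, hh, hxz⟩ := ha
  apply he
  have h1 : ⁅x, ⁅x, y⁆⁆ ∈ N k := hc _ (hb y hy)
  have h2 : ⁅x ^ 2, y⁆ ∈ N k := by
    have hzc : ∀ g : G, z * g = g * z := fun g => (Subgroup.mem_center_iff.mp hz g).symm
    have : ⁅x ^ 2, y⁆ = ⁅h, y⁆ := by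
      rw [hxz]
      simp only [commutatorElement_def, mul_inv_rev]
      rw [show z * h * y * (h⁻¹ * z⁻¹) * y⁻¹ = z * (h * y * h⁻¹) * z⁻¹ * y⁻¹ by group,
        hzc (h * y * h⁻¹)]
      group
    rw [this]
    have := hd y hy h hh
    have : ⁅y, h⁆⁻¹ ∈ N k := (N k).inv_mem this
    simpa [commutatorElement_inv] using this
  have key : ⁅x, y⁆ ^ 2 = ⁅x, ⁅x, y⁆⁆⁻¹ * ⁅x ^ 2, y⁆ := by
    rw [sq]
    simp only [commutatorElement_def]
    group
  rw [key]
  exact (N k).mul_mem ((N k).inv_mem h1) h2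
end
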